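/- For every t ∈ ℂ⁴ (with no restriction on the parameters), the restriction of δ_t to the 4-dimensional subspace spanned by x₁∧y₃, x₂∧y₃, x₃∧y₁, x₃∧y₂ has rank exactly 2; consequently δ_t(Λ^{1,1}) has dimension 3 and ker(δ_t) ∩ Λ^{1,1} has dimension 6. -/
import Mathlib


noncomputable section

open ExteriorAlgebra

/-- The exterior algebra `Λ` over `ℂ` on six generators. -/
abbrev Lam : Type := ExteriorAlgebra ℂ (Fin 6 → ℂ)

/-- The generators `x₁, x₂, x₃` of bidegree `(1,0)` (indexed by `0, 1, 2`). -/
def xg (i : Fin 3) : Lam := ExteriorAlgebra.ι ℂ (Pi.single (Fin.castAdd 3 i) 1)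

/-- The generators `y₁, y₂, y₃` of bidegree `(0,1)` (indexed by `0, 1, 2`). -/
def yg (j : Fin 3) : Lam := ExteriorAlgebra.ι ℂ (Pi.single (Fin.natAdd 3 j) 1)

/-- The ordered wedge monomial `x_{i₁}∧⋯∧x_{i_p}∧y_{j₁}∧⋯∧y_{j_q}` attached
to finsets `s = {i₁ < ⋯ < i_p}` and `u = {j₁ < ⋯ < j_q}`. -/
def monom (s u : Finset (Fin 3)) : Lam :=
  ((s.sort (· ≤ ·)).map xg).prod * ((u.sort (· ≤ ·)).map yg).prod

/-- The bigraded component `Λ^{p,q}`, the span of the monomials of bidegree `(p,q)`. -/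
def bigraded (p q : ℤ) : Submodule ℂ Lam :=
  Submodule.span ℂ
    {m | ∃ s u : Finset (Fin 3), (s.card : ℤ) = p ∧ (u.card : ℤ) = q ∧ m = monom s u}

/-- The component of pure total degree `k` of `Λ`. -/
def degComp (k : ℕ) : Submodule ℂ Lam :=
  LinearMap.range (ExteriorAlgebra.ι ℂ : (Fin 6 → ℂ) →ₗ[ℂ] Lam) ^ k

/-- The graded Leibniz rule: `d(a∧b) = d(a)∧b + (−1)ᵏ a∧d(b)` for `a` of pure
total degree `k`. -/
def IsAntiderivation (d : Lam →ₗ[ℂ] Lam) : Prop :=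
  ∀ (k : ℕ), ∀ a ∈ degComp k, ∀ b : Lam,
    d (a * b) = d a * b + ((-1 : ℂ) ^ k) • (a * d b)

/-- `d` is the map `∂`: the antiderivation with `∂x₁ = ∂x₂ = 0`, `∂x₃ = −x₁∧x₂`,
`∂yⱼ = 0`. -/
def IsDel (d : Lam →ₗ[ℂ] Lam) : Prop :=
  IsAntiderivation d ∧ d (xg 0) = 0 ∧ d (xg 1) = 0 ∧ d (xg 2) = -(xg 0 * xg 1) ∧
    (∀ j, d (yg j) = 0)

/-- `d` is the map `δ_t`: the antiderivation with `δ_t x₁ = δ_t x₂ = 0`,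
`δ_t x₃ = t₂₁ x₁∧y₁ − t₁₁ x₂∧y₁ + t₂₂ x₁∧y₂ − t₁₂ x₂∧y₂`, `δ_t y₁ = δ_t y₂ = 0`,
`δ_t y₃ = −y₁∧y₂`. -/
def IsDelta (t11 t12 t21 t22 : ℂ) (d : Lam →ₗ[ℂ] Lam) : Prop :=
  IsAntiderivation d ∧ d (xg 0) = 0 ∧ d (xg 1) = 0 ∧
    d (xg 2) = t21 • (xg 0 * yg 0) - t11 • (xg 1 * yg 0)
      + t22 • (xg 0 * yg 1) - t12 • (xg 1 * yg 1) ∧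
    d (yg 0) = 0 ∧ d (yg 1) = 0 ∧ d (yg 2) = -(yg 0 * yg 1)

/-- The dimension of the quotient of the subspace `K` by (its intersection with)
the subspace `I`; when `I ⊆ K` this is `dim (K / I)`. -/
def quotDim (K I : Submodule ℂ Lam) : ℕ :=
  Module.finrank ℂ (↥K ⧸ Submodule.comap K.subtype I)

namespace Stmt3Aux

def gen (i : Fin 6) : Lam := ExteriorAlgebra.ι ℂ (Pi.single i 1)

lemma gx0 : xg 0 = gen 0 := rfl
lemma gx1 : xg 1 = gen 1 := rfl
lemma gx2 : xg 2 = gen 2 := rfl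
lemma gy0 : yg 0 = gen 3 := rfl
lemma gy1 : yg 1 = gen 4 := rfl
lemma gy2 : yg 2 = gen 5 := rfl

lemma gen_swap (a b : Fin 6) : gen b * gen a = -(gen a * gen b) :=
  eq_neg_of_add_eq_zero_right (ExteriorAlgebra.ι_add_mul_swap _ _)

lemma gen_sq (a : Fin 6) : gen a * gen a = 0 := ExteriorAlgebra.ι_sq_zero _

lemma leib {d : Lam →ₗ[ℂ] Lam} (hd : IsAntiderivation d) (a : Fin 6) (b : Lam) :
    d (gen a * b) = d (gen a) * b - gen a * d b := by
  have hmem : gen a ∈ degComp 1 := by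
    rw [degComp, pow_one]; exact ⟨_, rfl⟩
  rw [hd 1 _ hmem b, pow_one, neg_one_smul, ← sub_eq_add_neg]

def coeff {n : ℕ} (σ : Fin n → Fin 6) : Lam →ₗ[ℂ] ℂ :=
  ExteriorAlgebra.liftAlternating (fun i =>
    if h : i = n then
      ((Matrix.detRowAlternating.compLinearMap (LinearMap.funLeft ℂ ℂ σ)).domDomCongr
        (finCongr h.symm))
    else 0)

lemma coeff_ιMulti {n : ℕ} (σ : Fin n → Fin 6) (v : Fin n → (Fin 6 → ℂ)) :
    coeff σ (ExteriorAlgebra.ιMulti ℂ n v) = Matrix.det (Matrix.of fun i j => v i (σ j)) := by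
  rw [coeff, ExteriorAlgebra.liftAlternating_apply_ιMulti, dif_pos rfl]
  rfl

lemma prod3 (a b c : Fin 6) : gen a * gen b * gen c =
    ExteriorAlgebra.ιMulti ℂ 3 ![Pi.single a 1, Pi.single b 1, Pi.single c 1] := by
  rw [ExteriorAlgebra.ιMulti_apply]
  simp [List.ofFn_succ, gen, mul_assoc]

lemma prod2 (a b : Fin 6) : gen a * gen b =
    ExteriorAlgebra.ιMulti ℂ 2 ![Pi.single a 1, Pi.single b 1] := by
  rw [ExteriorAlgebra.ιMulti_apply]
  simp [List.ofFn_succ, gen, mul_assoc]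

lemma coeff3 (σ : Fin 3 → Fin 6) (a b c : Fin 6) :
    coeff σ (gen a * gen b * gen c) =
      Matrix.det (Matrix.of fun i j =>
        (![Pi.single a 1, Pi.single b 1, Pi.single c 1] i : Fin 6 → ℂ) (σ j)) := by
  rw [prod3, coeff_ιMulti]

lemma coeff2 (σ : Fin 2 → Fin 6) (a b : Fin 6) :
    coeff σ (gen a * gen b) =
      Matrix.det (Matrix.of fun i j =>
        (![Pi.single a 1, Pi.single b 1] i : Fin 6 → ℂ) (σ j)) := by
  rw [prod2, coeff_ιMulti]

def V1 : Lam := gen 0 * gen 3 * gen 4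
def V2 : Lam := gen 1 * gen 3 * gen 4
def W (t11 t12 t21 t22 : ℂ) : Lam :=
  t21 • (gen 0 * gen 3 * gen 5) - t11 • (gen 1 * gen 3 * gen 5)
    + t22 • (gen 0 * gen 4 * gen 5) - t12 • (gen 1 * gen 4 * gen 5)
    + gen 2 * gen 3 * gen 4

set_option maxHeartbeats 1000000 in
lemma indep2 : LinearIndependent ℂ ![V1, V2] := by
  rw [Fintype.linearIndependent_iff]
  intro g hg
  have h0 := congrArg (coeff ![0,3,4]) hg
  have h1 := congrArg (coeff ![1,3,4]) hg
  simp only [Fin.sum_univ_two, Matrix.cons_val_zero, Matrix.cons_val_one, Matrix.head_cons,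
    map_add, map_smul, map_zero, smul_eq_mul, V1, V2] at h0 h1
  simp [coeff3, Matrix.det_fin_three, Pi.single_apply, Matrix.vecHead, Matrix.vecTail]
    at h0 h1
  intro i; fin_cases i
  exacts [h0, h1]

set_option maxHeartbeats 1000000 in
lemma indep3 (t11 t12 t21 t22 : ℂ) : LinearIndependent ℂ ![V1, V2, W t11 t12 t21 t22] := by
  rw [Fintype.linearIndependent_iff]
  intro g hg
  have h0 := congrArg (coeff ![0,3,4]) hg
  have h1 := congrArg (coeff ![1,3,4]) hg
  have h2 := congrArg (coeff ![2,3,4]) hg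
  simp only [Fin.sum_univ_three, Matrix.cons_val_zero, Matrix.cons_val_one, Matrix.head_cons,
    Matrix.cons_val_two, Matrix.tail_cons, map_add, map_sub, map_smul, map_zero, smul_eq_mul,
    V1, V2, W] at h0 h1 h2
  simp [coeff3, Matrix.det_fin_three, Pi.single_apply, Matrix.vecHead, Matrix.vecTail]
    at h0 h1 h2
  intro i; fin_cases i
  exacts [h0, h1, h2]

def b9 : Fin 9 → Lam :=
  ![gen 0 * gen 3, gen 0 * gen 4, gen 0 * gen 5, gen 1 * gen 3, gen 1 * gen 4,
    gen 1 * gen 5, gen 2 * gen 3, gen 2 * gen 4, gen 2 * gen 5]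

def T : Set Lam :=
  {gen 0 * gen 3, gen 0 * gen 4, gen 0 * gen 5, gen 1 * gen 3, gen 1 * gen 4,
    gen 1 * gen 5, gen 2 * gen 3, gen 2 * gen 4, gen 2 * gen 5}

lemma range_b9 : Set.range b9 = T := by
  ext z
  simp only [Set.mem_range, T, Set.mem_insert_iff, Set.mem_singleton_iff]
  constructor
  · rintro ⟨i, rfl⟩
    fin_cases i
    exacts [Or.inl rfl, Or.inr (Or.inl rfl), Or.inr (Or.inr (Or.inl rfl)),
      Or.inr (Or.inr (Or.inr (Or.inl rfl))),
      Or.inr (Or.inr (Or.inr (Or.inr (Or.inl rfl)))),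
      Or.inr (Or.inr (Or.inr (Or.inr (Or.inr (Or.inl rfl))))),
      Or.inr (Or.inr (Or.inr (Or.inr (Or.inr (Or.inr (Or.inl rfl)))))),
      Or.inr (Or.inr (Or.inr (Or.inr (Or.inr (Or.inr (Or.inr (Or.inl rfl))))))),
      Or.inr (Or.inr (Or.inr (Or.inr (Or.inr (Or.inr (Or.inr (Or.inr rfl)))))))]
  · rintro (rfl|rfl|rfl|rfl|rfl|rfl|rfl|rfl|rfl)
    exacts [⟨0, rfl⟩, ⟨1, rfl⟩, ⟨2, rfl⟩, ⟨3, rfl⟩, ⟨4, rfl⟩, ⟨5, rfl⟩, ⟨6, rfl⟩,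
      ⟨7, rfl⟩, ⟨8, rfl⟩]

set_option maxHeartbeats 2000000 in
lemma indep9 : LinearIndependent ℂ b9 := by
  rw [Fintype.linearIndependent_iff]
  intro g hg
  have h0 := congrArg (coeff ![0,3]) hg
  have h1 := congrArg (coeff ![0,4]) hg
  have h2 := congrArg (coeff ![0,5]) hg
  have h3 := congrArg (coeff ![1,3]) hg
  have h4 := congrArg (coeff ![1,4]) hg
  have h5 := congrArg (coeff ![1,5]) hg
  have h6 := congrArg (coeff ![2,3]) hg
  have h7 := congrArg (coeff ![2,4]) hg
  have h8 := congrArg (coeff ![2,5]) hg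
  simp only [Fin.sum_univ_succ, Finset.univ_unique, Fin.default_eq_zero, Finset.sum_singleton,
    Fin.sum_univ_zero, add_zero, b9, Matrix.cons_val_zero, Matrix.cons_val_succ,
    map_add, map_smul, map_zero, smul_eq_mul] at h0 h1 h2 h3 h4 h5 h6 h7 h8
  simp [coeff2, Matrix.det_fin_two, Pi.single_apply, Matrix.vecHead, Matrix.vecTail] at h0 h1 h2 h3 h4 h5 h6 h7 h8
  intro i; fin_cases i
  exacts [h0, h1, h2, h3, h4, h5, h6, h7, h8]

lemma monom_single (a b : Fin 3) : monom {a} {b} = xg a * yg b := by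
  simp [monom]

lemma bigraded_eq : bigraded 1 1 = Submodule.span ℂ T := by
  unfold bigraded
  congr 1
  ext m
  simp only [Set.mem_setOf_eq, T, Set.mem_insert_iff, Set.mem_singleton_iff]
  constructor
  · rintro ⟨s, u, hs, hu, rfl⟩
    obtain ⟨a, rfl⟩ := Finset.card_eq_one.1 (by exact_mod_cast hs)
    obtain ⟨b, rfl⟩ := Finset.card_eq_one.1 (by exact_mod_cast hu)
    rw [monom_single]
    fin_cases a <;> fin_cases b
    exacts [Or.inl rfl, Or.inr (Or.inl rfl), Or.inr (Or.inr (Or.inl rfl)),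
      Or.inr (Or.inr (Or.inr (Or.inl rfl))),
      Or.inr (Or.inr (Or.inr (Or.inr (Or.inl rfl)))),
      Or.inr (Or.inr (Or.inr (Or.inr (Or.inr (Or.inl rfl))))),
      Or.inr (Or.inr (Or.inr (Or.inr (Or.inr (Or.inr (Or.inl rfl)))))),
      Or.inr (Or.inr (Or.inr (Or.inr (Or.inr (Or.inr (Or.inr (Or.inl rfl))))))),
      Or.inr (Or.inr (Or.inr (Or.inr (Or.inr (Or.inr (Or.inr (Or.inr rfl)))))))]
  · rintro (rfl|rfl|rfl|rfl|rfl|rfl|rfl|rfl|rfl)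
    exacts [⟨{0},{0}, by norm_num, by norm_num, (monom_single 0 0).symm⟩,
      ⟨{0},{1}, by norm_num, by norm_num, (monom_single 0 1).symm⟩,
      ⟨{0},{2}, by norm_num, by norm_num, (monom_single 0 2).symm⟩,
      ⟨{1},{0}, by norm_num, by norm_num, (monom_single 1 0).symm⟩,
      ⟨{1},{1}, by norm_num, by norm_num, (monom_single 1 1).symm⟩,
      ⟨{1},{2}, by norm_num, by norm_num, (monom_single 1 2).symm⟩,
      ⟨{2},{0}, by norm_num, by norm_num, (monom_single 2 0).symm⟩,
      ⟨{2},{1}, by norm_num, by norm_num, (monom_single 2 1).symm⟩,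
      ⟨{2},{2}, by norm_num, by norm_num, (monom_single 2 2).symm⟩]

end Stmt3Aux
open Stmt3Aux
set_option maxHeartbeats 4000000 in
/-- for every `t`, the restriction of `δ_t` to the subspace spanned by
`x₁∧y₃, x₂∧y₃, x₃∧y₁, x₃∧y₂` has rank exactly `2`; consequently `δ_t(Λ^{1,1})` has
dimension `3` and `ker δ_t ∩ Λ^{1,1}` has dimension `6`. -/
theorem stmt3 (t11 t12 t21 t22 : ℂ) (del delta : Lam →ₗ[ℂ] Lam)
    (hdel : IsDel del) (hdelta : IsDelta t11 t12 t21 t22 delta) :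
    Module.finrank ℂ ↥(Submodule.map delta (Submodule.span ℂ
      {xg 0 * yg 2, xg 1 * yg 2, xg 2 * yg 0, xg 2 * yg 1})) = 2 ∧
    Module.finrank ℂ ↥(Submodule.map delta (bigraded 1 1)) = 3 ∧
    Module.finrank ℂ ↥(LinearMap.ker delta ⊓ bigraded 1 1) = 6 := by
  obtain ⟨hL, hdx0, hdx1, hdx2, hdy0, hdy1, hdy2⟩ := hdelta
  simp only [gx0, gx1, gx2, gy0, gy1, gy2] at hdx0 hdx1 hdx2 hdy0 hdy1 hdy2 ⊢
  have d00 : delta (gen 0 * gen 3) = 0 := by rw [leib hL, hdx0, hdy0]; simp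
  have d01 : delta (gen 0 * gen 4) = 0 := by rw [leib hL, hdx0, hdy1]; simp
  have d10 : delta (gen 1 * gen 3) = 0 := by rw [leib hL, hdx1, hdy0]; simp
  have d11 : delta (gen 1 * gen 4) = 0 := by rw [leib hL, hdx1, hdy1]; simp
  have d02 : delta (gen 0 * gen 5) = V1 := by
    rw [leib hL, hdx0, hdy2]; simp [V1, mul_assoc]
  have d12 : delta (gen 1 * gen 5) = V2 := by
    rw [leib hL, hdx1, hdy2]; simp [V2, mul_assoc]
  have d20 : delta (gen 2 * gen 3) = t12 • V2 - t22 • V1 := by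
    rw [leib hL, hdx2, hdy0]
    simp only [V1, V2, sub_mul, add_mul, smul_mul_assoc, mul_assoc, gen_sq, gen_swap 3 4,
      mul_neg, smul_neg, mul_zero, smul_zero, sub_zero, zero_sub, zero_add, add_zero, neg_neg]
    all_goals abel
  have d21 : delta (gen 2 * gen 4) = t21 • V1 - t11 • V2 := by
    rw [leib hL, hdx2, hdy1]
    simp only [V1, V2, sub_mul, add_mul, smul_mul_assoc, mul_assoc, gen_sq,
      mul_neg, smul_neg, mul_zero, smul_zero, sub_zero, zero_sub, zero_add, add_zero, neg_neg]
    all_goals abel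
  have d22 : delta (gen 2 * gen 5) = W t11 t12 t21 t22 := by
    rw [leib hL, hdx2, hdy2]
    simp only [W, sub_mul, add_mul, smul_mul_assoc, mul_assoc, mul_neg, neg_neg,
      mul_zero, smul_zero, sub_zero, zero_sub, zero_add, add_zero]
    all_goals abel
  have m1 : V1 ∈ Submodule.span ℂ ({V1, V2} : Set Lam) :=
    Submodule.subset_span (Set.mem_insert _ _)
  have m2 : V2 ∈ Submodule.span ℂ ({V1, V2} : Set Lam) :=
    Submodule.subset_span (Set.mem_insert_of_mem _ rfl)
  have r2 : Set.range ![V1, V2] = ({V1, V2} : Set Lam) := by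
    ext z
    simp only [Set.mem_range, Set.mem_insert_iff, Set.mem_singleton_iff]
    constructor
    · rintro ⟨i, rfl⟩
      fin_cases i
      exacts [Or.inl rfl, Or.inr rfl]
    · rintro (rfl|rfl)
      exacts [⟨0, rfl⟩, ⟨1, rfl⟩]
  have r3 : Set.range ![V1, V2, W t11 t12 t21 t22]
      = ({V1, V2, W t11 t12 t21 t22} : Set Lam) := by
    ext z
    simp only [Set.mem_range, Set.mem_insert_iff, Set.mem_singleton_iff]
    constructor
    · rintro ⟨i, rfl⟩
      fin_cases i
      exacts [Or.inl rfl, Or.inr (Or.inl rfl), Or.inr (Or.inr rfl)]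
    · rintro (rfl|rfl|rfl)
      exacts [⟨0, rfl⟩, ⟨1, rfl⟩, ⟨2, rfl⟩]
  have e1 : Submodule.map delta (Submodule.span ℂ
      {gen 0 * gen 5, gen 1 * gen 5, gen 2 * gen 3, gen 2 * gen 4})
      = Submodule.span ℂ ({V1, V2} : Set Lam) := by
    rw [Submodule.map_span, Set.image_insert_eq, Set.image_insert_eq, Set.image_insert_eq,
      Set.image_singleton, d02, d12, d20, d21]
    refine le_antisymm (Submodule.span_le.2 ?_) (Submodule.span_le.2 ?_)
    · intro z hz
      simp only [Set.mem_insert_iff, Set.mem_singleton_iff] at hz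
      rcases hz with rfl|rfl|rfl|rfl
      · exact m1
      · exact m2
      · exact Submodule.sub_mem _ (Submodule.smul_mem _ _ m2) (Submodule.smul_mem _ _ m1)
      · exact Submodule.sub_mem _ (Submodule.smul_mem _ _ m1) (Submodule.smul_mem _ _ m2)
    · intro z hz
      simp only [Set.mem_insert_iff, Set.mem_singleton_iff] at hz
      rcases hz with rfl|rfl
      · exact Submodule.subset_span (by simp)
      · exact Submodule.subset_span (by simp)
  have p1 : Module.finrank ℂ ↥(Submodule.map delta (Submodule.span ℂ
      {gen 0 * gen 5, gen 1 * gen 5, gen 2 * gen 3, gen 2 * gen 4})) = 2 := by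
    rw [e1, ← r2, finrank_span_eq_card indep2, Fintype.card_fin]
  have m1' : V1 ∈ Submodule.span ℂ ({V1, V2, W t11 t12 t21 t22} : Set Lam) :=
    Submodule.subset_span (by simp)
  have m2' : V2 ∈ Submodule.span ℂ ({V1, V2, W t11 t12 t21 t22} : Set Lam) :=
    Submodule.subset_span (by simp)
  have e2 : Submodule.map delta (bigraded 1 1)
      = Submodule.span ℂ ({V1, V2, W t11 t12 t21 t22} : Set Lam) := by
    rw [bigraded_eq, Submodule.map_span]
    rw [show (T : Set Lam) = {gen 0 * gen 3, gen 0 * gen 4, gen 0 * gen 5, gen 1 * gen 3,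
      gen 1 * gen 4, gen 1 * gen 5, gen 2 * gen 3, gen 2 * gen 4, gen 2 * gen 5} from rfl]
    rw [Set.image_insert_eq, Set.image_insert_eq, Set.image_insert_eq, Set.image_insert_eq,
      Set.image_insert_eq, Set.image_insert_eq, Set.image_insert_eq, Set.image_insert_eq,
      Set.image_singleton, d00, d01, d02, d10, d11, d12, d20, d21, d22]
    refine le_antisymm (Submodule.span_le.2 ?_) (Submodule.span_le.2 ?_)
    · intro z hz
      simp only [Set.mem_insert_iff, Set.mem_singleton_iff] at hz
      rcases hz with rfl|rfl|rfl|rfl|rfl|rfl|rfl|rfl|rfl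
      · exact Submodule.zero_mem _
      · exact Submodule.zero_mem _
      · exact m1'
      · exact Submodule.zero_mem _
      · exact Submodule.zero_mem _
      · exact m2'
      · exact Submodule.sub_mem _ (Submodule.smul_mem _ _ m2') (Submodule.smul_mem _ _ m1')
      · exact Submodule.sub_mem _ (Submodule.smul_mem _ _ m1') (Submodule.smul_mem _ _ m2')
      · exact Submodule.subset_span (by simp)
    · intro z hz
      simp only [Set.mem_insert_iff, Set.mem_singleton_iff] at hz
      rcases hz with rfl|rfl|rfl
      · exact Submodule.subset_span (by simp)
      · exact Submodule.subset_span (by simp)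
      · exact Submodule.subset_span (by simp)
  have p2 : Module.finrank ℂ ↥(Submodule.map delta (bigraded 1 1)) = 3 := by
    rw [e2, ← r3, finrank_span_eq_card (indep3 t11 t12 t21 t22), Fintype.card_fin]
  refine ⟨p1, p2, ?_⟩
  have hV9 : Module.finrank ℂ ↥(bigraded 1 1) = 9 := by
    rw [bigraded_eq, ← range_b9, finrank_span_eq_card indep9, Fintype.card_fin]
  haveI hFD : FiniteDimensional ℂ ↥(bigraded 1 1) := by
    rw [bigraded_eq, ← range_b9]
    exact FiniteDimensional.span_of_finite ℂ (Set.finite_range b9)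
  have key := LinearMap.finrank_range_add_finrank_ker (delta.domRestrict (bigraded 1 1))
  rw [LinearMap.range_domRestrict, LinearMap.ker_domRestrict, hV9] at key
  rw [p2] at key
  have h1 := Submodule.finrank_map_subtype_eq (bigraded 1 1)
    (Submodule.comap (bigraded 1 1).subtype (LinearMap.ker delta))
  rw [Submodule.map_comap_subtype, inf_comm] at h1
  omega
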